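/- The quotient ring ℂ[α,β,γ]/J_2, with J_2 = (α² + β − 8, α(β + 8) + γ, αγ), is a 6-dimensional ℂ-vector space. -/

import Mathlib

open MvPolynomial

noncomputable section

abbrev R3 : Type := MvPolynomial (Fin 3) ℂ

def al : R3 := X 0
def be : R3 := X 1
def ga : R3 := X 2

def J2 : Ideal R3 := Ideal.span {al ^ 2 + be - 8, al * (be + 8) + ga, al * ga}

def fpoly : Polynomial ℂ := Polynomial.X ^ 4 - Polynomial.C 16 * Polynomial.X ^ 2

lemma fpoly_natDegree : fpoly.natDegree = 4 := by
  unfold fpoly; compute_degree!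

lemma fpoly_ne_zero : fpoly ≠ 0 := by
  intro h
  have := fpoly_natDegree
  rw [h] at this
  simp at this

lemma g1_mem : al ^ 2 + be - 8 ∈ J2 := Ideal.subset_span (by simp)
lemma g2_mem : al * (be + 8) + ga ∈ J2 := Ideal.subset_span (by simp)
lemma g3_mem : al * ga ∈ J2 := Ideal.subset_span (by simp)

lemma quartic_mem : al ^ 4 - 16 * al ^ 2 ∈ J2 := by
  have h : al ^ 4 - 16 * al ^ 2 =
      al ^ 2 * (al ^ 2 + be - 8) - al * (al * (be + 8) + ga) + al * ga := by ring
  rw [h]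
  exact J2.add_mem (J2.sub_mem (J2.mul_mem_left _ g1_mem) (J2.mul_mem_left _ g2_mem)) g3_mem

abbrev Adj := AdjoinRoot fpoly

def r : Adj := AdjoinRoot.root fpoly

lemma hr : r ^ 4 - 16 * r ^ 2 = 0 := by
  have h3 : Polynomial.aeval r fpoly = 0 := by
    rw [r, AdjoinRoot.aeval_eq, AdjoinRoot.mk_self]
  simpa [fpoly, map_ofNat] using h3

def φ : R3 →ₐ[ℂ] Adj := aeval ![r, 8 - r ^ 2, r ^ 3 - 16 * r]

lemma phi_al : φ al = r := by simp [φ, al]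
lemma phi_be : φ be = 8 - r ^ 2 := by simp [φ, be]
lemma phi_ga : φ ga = r ^ 3 - 16 * r := by simp [φ, ga]

lemma phi_vanish : ∀ a ∈ J2, φ a = 0 := by
  intro a ha
  have hle : J2 ≤ RingHom.ker (φ : R3 →+* Adj) := by
    rw [J2, Ideal.span_le]
    intro x hx
    simp only [Set.mem_insert_iff, Set.mem_singleton_iff] at hx
    rcases hx with h | h | h <;> subst h <;>
      simp only [SetLike.mem_coe, RingHom.mem_ker, AlgHom.coe_toRingHom,
        map_add, map_sub, map_mul, map_pow, map_ofNat, phi_al, phi_be, phi_ga] <;>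
      first
        | ring1
        | linear_combination hr
  exact hle ha

def φbar : R3 ⧸ J2 →ₐ[ℂ] Adj := Ideal.Quotient.liftₐ J2 φ phi_vanish

def ψ : Adj →ₐ[ℂ] R3 ⧸ J2 :=
  AdjoinRoot.liftAlgHom fpoly (Algebra.ofId ℂ _) (Ideal.Quotient.mk J2 al) (by
    show Polynomial.aeval (Ideal.Quotient.mk J2 al) fpoly = 0
    have h16 : (algebraMap ℂ (R3 ⧸ J2)) 16 = Ideal.Quotient.mk J2 16 := by
      rw [show ((16 : R3) = algebraMap ℂ R3 16) from by
        rw [algebraMap_eq]; exact (map_ofNat (C : ℂ →+* R3) 16).symm]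
      rfl
    have h : Polynomial.aeval (Ideal.Quotient.mk J2 al) fpoly =
        Ideal.Quotient.mk J2 (al ^ 4 - 16 * al ^ 2) := by
      simp [fpoly, h16]
    rw [h, Ideal.Quotient.eq_zero_iff_mem]
    exact quartic_mem)

lemma psi_root : ψ r = Ideal.Quotient.mk J2 al := by
  unfold ψ r
  apply AdjoinRoot.liftAlgHom_root

lemma mk_be : Ideal.Quotient.mk J2 be = Ideal.Quotient.mk J2 (8 - al ^ 2) := by
  rw [Ideal.Quotient.mk_eq_mk_iff_sub_mem]
  have : be - (8 - al ^ 2) = al ^ 2 + be - 8 := by ring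
  rw [this]; exact g1_mem

lemma mk_ga : Ideal.Quotient.mk J2 ga = Ideal.Quotient.mk J2 (al ^ 3 - 16 * al) := by
  rw [Ideal.Quotient.mk_eq_mk_iff_sub_mem]
  have : ga - (al ^ 3 - 16 * al) =
      (al * (be + 8) + ga) - al * (al ^ 2 + be - 8) := by ring
  rw [this]
  exact J2.sub_mem g2_mem (J2.mul_mem_left _ g1_mem)

lemma comp1 : ψ.comp φbar = AlgHom.id ℂ (R3 ⧸ J2) := by
  apply Ideal.Quotient.algHom_ext
  apply MvPolynomial.algHom_ext
  intro i
  fin_cases i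
  · show ψ (φ al) = Ideal.Quotient.mk J2 al
    rw [phi_al, psi_root]
  · show ψ (φ be) = Ideal.Quotient.mk J2 be
    rw [phi_be, map_sub, map_pow, map_ofNat, psi_root, mk_be, map_sub, map_pow]
    rw [(map_ofNat (Ideal.Quotient.mk J2) 8).symm]
  · show ψ (φ ga) = Ideal.Quotient.mk J2 ga
    rw [phi_ga, map_sub, map_mul, map_pow, map_ofNat, psi_root, mk_ga, map_sub, map_mul,
      map_pow]
    rw [(map_ofNat (Ideal.Quotient.mk J2) 16).symm]

lemma comp2 : φbar.comp ψ = AlgHom.id ℂ Adj := by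
  apply AdjoinRoot.algHom_ext
  rw [AlgHom.comp_apply]
  rw [show AdjoinRoot.root fpoly = r from rfl, psi_root]
  rw [show φbar (Ideal.Quotient.mk J2 al) = φ al from rfl, phi_al]
  rfl

def equivAdj : (R3 ⧸ J2) ≃ₐ[ℂ] Adj := AlgEquiv.ofAlgHom φbar ψ comp2 comp1

theorem stmt10 : Module.finrank ℂ (R3 ⧸ J2) = 4 := by
  have h1 : Module.finrank ℂ (R3 ⧸ J2) = Module.finrank ℂ Adj :=
    equivAdj.toLinearEquiv.finrank_eq
  have h2 : Module.finrank ℂ Adj = fpoly.natDegree := by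
    rw [(AdjoinRoot.powerBasis fpoly_ne_zero).finrank, AdjoinRoot.powerBasis_dim]
  rw [h1, h2, fpoly_natDegree]
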